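/- For each fixed y ∈ (0,1), the function p ↦ sin_p(y) is strictly log-concave on (0,∞); in particular, for p > 2 and y ∈ (0,1), (sin_p y)² > sin_{p-1}(y)·sin_{p+1}(y). -/

import Mathlib

open Real Set

/-- Strict convexity data for `θ ↦ -(log (1 - exp (P θ * W θ)) / P θ)` along an affine path. -/
lemma psi_path_strictConvexOn (p1 w1 dp dw : ℝ)
    (hP : ∀ θ ∈ Icc (0:ℝ) 1, 0 < p1 + θ * dp)
    (hW : ∀ θ ∈ Icc (0:ℝ) 1, w1 + θ * dw < 0)
    (hdp : dp ≠ 0) :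
    StrictConvexOn ℝ (Icc (0:ℝ) 1)
      (fun θ => -(Real.log (1 - Real.exp ((p1 + θ * dp) * (w1 + θ * dw))) / (p1 + θ * dp))) := by
  set P : ℝ → ℝ := fun θ => p1 + θ * dp with hPdef
  set W : ℝ → ℝ := fun θ => w1 + θ * dw with hWdef
  set q : ℝ → ℝ := fun θ => -(Real.log (1 - Real.exp (P θ * W θ)) / P θ) with hqdef
  -- the open set where everything is nice
  set s : Set ℝ := {θ | 0 < P θ ∧ W θ < 0} with hsdef
  have hPcont : Continuous P := by fun_prop
  have hWcont : Continuous W := by fun_prop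
  have hsopen : IsOpen s := by
    have h1 : IsOpen {θ | 0 < P θ} := isOpen_lt continuous_const hPcont
    have h2 : IsOpen {θ | W θ < 0} := isOpen_lt hWcont continuous_const
    exact h1.inter h2
  have hsub : Icc (0:ℝ) 1 ⊆ s := fun θ hθ => ⟨hP θ hθ, hW θ hθ⟩
  -- first derivative
  set q1 : ℝ → ℝ := fun θ =>
    -((-(Real.exp (P θ * W θ) * (dp * W θ + P θ * dw)) / (1 - Real.exp (P θ * W θ)) * P θ -
        Real.log (1 - Real.exp (P θ * W θ)) * dp) / P θ ^ 2) with hq1def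
  have hB : ∀ θ ∈ s, 0 < 1 - Real.exp (P θ * W θ) := by
    intro θ hθ
    have : P θ * W θ < 0 := mul_neg_of_pos_of_neg hθ.1 hθ.2
    have := Real.exp_lt_one_iff.mpr this
    linarith
  have hPd : ∀ θ : ℝ, HasDerivAt P dp θ := by
    intro θ
    simpa [hPdef] using ((hasDerivAt_id θ).mul_const dp).const_add p1
  have hWd : ∀ θ : ℝ, HasDerivAt W dw θ := by
    intro θ
    simpa [hWdef] using ((hasDerivAt_id θ).mul_const dw).const_add w1
  have hud : ∀ θ : ℝ, HasDerivAt (fun θ => P θ * W θ) (dp * W θ + P θ * dw) θ := by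
    intro θ
    exact (hPd θ).mul (hWd θ)
  have hEd : ∀ θ : ℝ, HasDerivAt (fun θ => Real.exp (P θ * W θ))
      (Real.exp (P θ * W θ) * (dp * W θ + P θ * dw)) θ := by
    intro θ
    simpa [mul_comm] using (hud θ).exp
  have hBd : ∀ θ : ℝ, HasDerivAt (fun θ => 1 - Real.exp (P θ * W θ))
      (-(Real.exp (P θ * W θ) * (dp * W θ + P θ * dw))) θ := by
    intro θ
    simpa using (hEd θ).const_sub 1
  have hLd : ∀ θ ∈ s, HasDerivAt (fun θ => Real.log (1 - Real.exp (P θ * W θ)))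
      (-(Real.exp (P θ * W θ) * (dp * W θ + P θ * dw)) / (1 - Real.exp (P θ * W θ))) θ := by
    intro θ hθ
    exact (hBd θ).log (ne_of_gt (hB θ hθ))
  have hq1 : ∀ θ ∈ s, HasDerivAt q (q1 θ) θ := by
    intro θ hθ
    exact (((hLd θ hθ).div (hPd θ) (ne_of_gt hθ.1))).neg

  -- second derivative: closed form
  set CF : ℝ → ℝ := fun θ =>
    (Real.exp (P θ * W θ) * P θ ^ 2 * (dp * W θ + P θ * dw) ^ 2 +
      2 * dp ^ 2 * ((-Real.log (1 - Real.exp (P θ * W θ))) * (1 - Real.exp (P θ * W θ)) ^ 2 +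
        (-(P θ * W θ)) * Real.exp (P θ * W θ) * (1 - Real.exp (P θ * W θ)))) /
      (P θ ^ 3 * (1 - Real.exp (P θ * W θ)) ^ 2) with hCFdef
  have hu'd : ∀ θ : ℝ, HasDerivAt (fun θ => dp * W θ + P θ * dw) (dp * dw + dp * dw) θ := by
    intro θ
    exact ((hWd θ).const_mul dp).add ((hPd θ).mul_const dw)
  have hq2 : ∀ θ ∈ s, HasDerivAt q1 (CF θ) θ := by
    intro θ hθ
    have hBne : (1 - Real.exp (P θ * W θ)) ≠ 0 := ne_of_gt (hB θ hθ)
    have hPne : P θ ≠ 0 := ne_of_gt hθ.1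
    have h := ((((((hEd θ).mul (hu'd θ)).neg.div (hBd θ) hBne).mul (hPd θ)).sub
      ((hLd θ hθ).mul_const dp)).div ((hPd θ).pow 2) (pow_ne_zero 2 hPne)).neg
    refine h.congr_deriv ?_
    simp only [hCFdef, Pi.neg_apply, Pi.mul_apply, Pi.div_apply, Pi.sub_apply, Pi.pow_apply,
      Nat.cast_ofNat]
    field_simp
    ring
  have hCFpos : ∀ θ ∈ s, 0 < CF θ := by
    intro θ hθ
    have hBpos := hB θ hθ
    have hPpos := hθ.1
    have hWneg : W θ < 0 := hθ.2
    have hEpos : 0 < Real.exp (P θ * W θ) := Real.exp_pos _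
    have hB1 : 1 - Real.exp (P θ * W θ) < 1 := by nlinarith
    have hLneg : Real.log (1 - Real.exp (P θ * W θ)) < 0 := Real.log_neg hBpos hB1
    have huneg : P θ * W θ < 0 := mul_neg_of_pos_of_neg hPpos hWneg
    have hdp2 : 0 < dp ^ 2 := by positivity
    have h1 : 0 ≤ Real.exp (P θ * W θ) * P θ ^ 2 * (dp * W θ + P θ * dw) ^ 2 := by positivity
    have h2 : 0 < (-Real.log (1 - Real.exp (P θ * W θ))) * (1 - Real.exp (P θ * W θ)) ^ 2 +
        (-(P θ * W θ)) * Real.exp (P θ * W θ) * (1 - Real.exp (P θ * W θ)) := by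
      have ha := mul_pos (mul_pos (neg_pos.mpr huneg) hEpos) hBpos
      have hb := mul_pos (neg_pos.mpr hLneg) (pow_pos hBpos 2)
      nlinarith
    have hden : 0 < P θ ^ 3 * (1 - Real.exp (P θ * W θ)) ^ 2 := by positivity
    simp only [hCFdef]
    apply div_pos _ hden
    nlinarith
  have hqcont : ContinuousOn q (Icc 0 1) := fun θ hθ =>
    ((hq1 θ (hsub hθ)).continuousAt).continuousWithinAt
  have h2d : ∀ θ ∈ interior (Icc (0:ℝ) 1), 0 < (deriv^[2] q) θ := by
    intro θ hθ
    rw [interior_Icc] at hθ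
    have hθs : θ ∈ s := hsub (Ioo_subset_Icc_self hθ)
    have hev : deriv q =ᶠ[nhds θ] q1 := by
      filter_upwards [hsopen.mem_nhds hθs] with x hx
      exact (hq1 x hx).deriv
    have h22 : (deriv^[2] q) θ = deriv (deriv q) θ := rfl
    rw [h22, hev.deriv_eq, (hq2 θ hθs).deriv]
    exact hCFpos θ hθs
  exact strictConvexOn_of_deriv2_pos (convex_Icc 0 1) hqcont h2d

/-- Strict convexity inequality for `ψ(p,w) = -log(1-e^(pw))/p`. -/
lemma psi_ineq {p1 p2 w1 w2 a b : ℝ} (hp1 : 0 < p1) (hp2 : 0 < p2) (hne : p1 ≠ p2)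
    (hw1 : w1 < 0) (hw2 : w2 < 0) (ha : 0 < a) (hb : 0 < b) (hab : a + b = 1) :
    -(Real.log (1 - Real.exp ((a * p1 + b * p2) * (a * w1 + b * w2))) / (a * p1 + b * p2)) <
      a * -(Real.log (1 - Real.exp (p1 * w1)) / p1) +
        b * -(Real.log (1 - Real.exp (p2 * w2)) / p2) := by
  have hP : ∀ θ ∈ Icc (0:ℝ) 1, 0 < p1 + θ * (p2 - p1) := by
    intro θ hθ
    rcases le_or_gt 0 (p2 - p1) with h | h
    · nlinarith [mul_nonneg hθ.1 h]
    · nlinarith [mul_le_mul_of_nonpos_right hθ.2 h.le]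
  have hW : ∀ θ ∈ Icc (0:ℝ) 1, w1 + θ * (w2 - w1) < 0 := by
    intro θ hθ
    rcases le_or_gt 0 (w2 - w1) with h | h
    · nlinarith [mul_le_mul_of_nonneg_right hθ.2 h]
    · nlinarith [mul_nonpos_of_nonneg_of_nonpos hθ.1 h.le]
  have hdp : p2 - p1 ≠ 0 := sub_ne_zero.mpr (Ne.symm hne)
  have hconv := psi_path_strictConvexOn p1 w1 (p2 - p1) (w2 - w1) hP hW hdp
  have hq := hconv.2 (by norm_num : (0:ℝ) ∈ Icc (0:ℝ) 1)
    (by norm_num : (1:ℝ) ∈ Icc (0:ℝ) 1) (by norm_num) ha hb hab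
  simp only [smul_eq_mul, mul_zero, mul_one, zero_add, zero_mul, add_zero, one_mul] at hq
  have e1 : p1 + b * (p2 - p1) = a * p1 + b * p2 := by linear_combination (-p1) * hab
  have e2 : w1 + b * (w2 - w1) = a * w1 + b * w2 := by linear_combination (-w1) * hab
  have e3 : p1 + (p2 - p1) = p2 := by ring
  have e4 : w1 + (w2 - w1) = w2 := by ring
  rw [e1, e2, e3, e4] at hq
  exact hq

/-- Pointwise strict inequality for the integrands. -/
lemma pointwise_rpow {p1 p2 t1 t2 a b : ℝ} (hp1 : 0 < p1) (hp2 : 0 < p2) (hne : p1 ≠ p2)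
    (ht10 : 0 < t1) (ht11 : t1 < 1) (ht20 : 0 < t2) (ht21 : t2 < 1)
    (ha : 0 < a) (hb : 0 < b) (hab : a + b = 1) :
    (1 - (t1 ^ a * t2 ^ b) ^ (a * p1 + b * p2)) ^ (-(1 / (a * p1 + b * p2))) <
      ((1 - t1 ^ p1) ^ (-(1 / p1))) ^ a * ((1 - t2 ^ p2) ^ (-(1 / p2))) ^ b := by
  have hpbar : 0 < a * p1 + b * p2 := by positivity
  set w1 := Real.log t1 with hw1def
  set w2 := Real.log t2 with hw2def
  have hw1 : w1 < 0 := Real.log_neg ht10 ht11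
  have hw2 : w2 < 0 := Real.log_neg ht20 ht21
  have hB1 : 0 < 1 - Real.exp (p1 * w1) := by
    have h := Real.exp_lt_one_iff.mpr (mul_neg_of_pos_of_neg hp1 hw1)
    linarith
  have hB2 : 0 < 1 - Real.exp (p2 * w2) := by
    have h := Real.exp_lt_one_iff.mpr (mul_neg_of_pos_of_neg hp2 hw2)
    linarith
  have hwbar : a * w1 + b * w2 < 0 := by nlinarith
  have hBbar : 0 < 1 - Real.exp ((a * p1 + b * p2) * (a * w1 + b * w2)) := by
    have h := Real.exp_lt_one_iff.mpr (mul_neg_of_pos_of_neg hpbar hwbar)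
    linarith
  have h1 : t1 ^ p1 = Real.exp (p1 * w1) := by
    rw [Real.rpow_def_of_pos ht10, mul_comm]
  have h2 : t2 ^ p2 = Real.exp (p2 * w2) := by
    rw [Real.rpow_def_of_pos ht20, mul_comm]
  have hm : t1 ^ a * t2 ^ b = Real.exp (a * w1 + b * w2) := by
    rw [Real.rpow_def_of_pos ht10, Real.rpow_def_of_pos ht20, ← Real.exp_add]
    ring_nf
    rw [hw1def, hw2def]
    ring_nf
  have h3 : (t1 ^ a * t2 ^ b) ^ (a * p1 + b * p2)
      = Real.exp ((a * p1 + b * p2) * (a * w1 + b * w2)) := by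
    rw [hm, Real.rpow_def_of_pos (Real.exp_pos _), Real.log_exp, mul_comm]
  have hL : (1 - (t1 ^ a * t2 ^ b) ^ (a * p1 + b * p2)) ^ (-(1 / (a * p1 + b * p2)))
      = Real.exp (-(Real.log (1 - Real.exp ((a * p1 + b * p2) * (a * w1 + b * w2)))
          / (a * p1 + b * p2))) := by
    rw [h3, Real.rpow_def_of_pos hBbar]
    congr 1
    ring
  have hR1 : ((1 - t1 ^ p1) ^ (-(1 / p1))) ^ a
      = Real.exp (a * -(Real.log (1 - Real.exp (p1 * w1)) / p1)) := by
    rw [h1, Real.rpow_def_of_pos hB1, Real.rpow_def_of_pos (Real.exp_pos _), Real.log_exp]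
    congr 1
    ring
  have hR2 : ((1 - t2 ^ p2) ^ (-(1 / p2))) ^ b
      = Real.exp (b * -(Real.log (1 - Real.exp (p2 * w2)) / p2)) := by
    rw [h2, Real.rpow_def_of_pos hB2, Real.rpow_def_of_pos (Real.exp_pos _), Real.log_exp]
    congr 1
    ring
  rw [hL, hR1, hR2, ← Real.exp_add]
  exact Real.exp_lt_exp.mpr (psi_ineq hp1 hp2 hne hw1 hw2 ha hb hab)

lemma integrand_contOn {p c : ℝ} (hp : 0 < p) (hc : c < 1) :
    ContinuousOn (fun t : ℝ => (1 - t ^ p) ^ (-(1 / p))) (Icc 0 c) := by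
  have h1 : ContinuousOn (fun t : ℝ => 1 - t ^ p) (Icc 0 c) := by
    apply continuousOn_const.sub
    intro t ht
    exact (Real.continuousAt_rpow_const t p (Or.inr hp.le)).continuousWithinAt
  apply h1.rpow_const
  intro t ht
  left
  have : t ^ p < 1 := Real.rpow_lt_one ht.1 (lt_of_le_of_lt ht.2 hc) hp
  have : 0 < 1 - t ^ p := by linarith
  exact ne_of_gt this

lemma one_le_integrand {p t : ℝ} (hp : 0 < p) (ht0 : 0 ≤ t) (ht1 : t < 1) :
    1 ≤ (1 - t ^ p) ^ (-(1 / p)) := by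
  have h1 : t ^ p < 1 := Real.rpow_lt_one ht0 ht1 hp
  have h0 : 0 < 1 - t ^ p := by linarith
  have h2 : 1 - t ^ p ≤ 1 := by nlinarith [Real.rpow_nonneg ht0 p]
  exact Real.one_le_rpow_of_pos_of_le_one_of_nonpos h0 h2 (neg_nonpos.mpr (by positivity))

lemma scaled_contOn {p x : ℝ} (hp : 0 < p) (hx0 : 0 < x) (hx1 : x < 1) :
    ContinuousOn (fun v : ℝ => (1 - (x * v) ^ p) ^ (-(1 / p))) (Icc 0 1) := by
  apply (integrand_contOn hp hx1).comp (continuous_const.mul continuous_id).continuousOn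
  intro v hv
  constructor
  · exact mul_nonneg hx0.le hv.1
  · simpa using mul_le_of_le_one_right hx0.le hv.2

lemma I_scaling {p x : ℝ} (hx0 : 0 < x) :
    (∫ t in (0:ℝ)..x, (1 - t ^ p) ^ (-(1 / p)))
      = x * ∫ v in (0:ℝ)..1, (1 - (x * v) ^ p) ^ (-(1 / p)) := by
  rw [intervalIntegral.integral_comp_mul_left (fun t => (1 - t ^ p) ^ (-(1 / p)))
    (ne_of_gt hx0)]
  simp [smul_eq_mul]
  field_simp

lemma I_lt {p1 p2 x1 x2 a b yv : ℝ} (hp1 : 0 < p1) (hp2 : 0 < p2) (hne : p1 ≠ p2)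
    (hx10 : 0 < x1) (hx11 : x1 < 1) (hx20 : 0 < x2) (hx21 : x2 < 1)
    (ha : 0 < a) (hb : 0 < b) (hab : a + b = 1)
    (h1 : (∫ t in (0:ℝ)..x1, (1 - t ^ p1) ^ (-(1 / p1))) = yv)
    (h2 : (∫ t in (0:ℝ)..x2, (1 - t ^ p2) ^ (-(1 / p2))) = yv) :
    (∫ t in (0:ℝ)..(x1 ^ a * x2 ^ b),
      (1 - t ^ (a * p1 + b * p2)) ^ (-(1 / (a * p1 + b * p2)))) < yv := by
  have hpbar : 0 < a * p1 + b * p2 := by positivity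
  set xb := x1 ^ a * x2 ^ b with hxbdef
  have hxb0 : 0 < xb := by positivity
  have hxb1 : xb < 1 := by
    have u1 : x1 ^ a < 1 := Real.rpow_lt_one hx10.le hx11 ha
    have u2 : x2 ^ b < 1 := Real.rpow_lt_one hx20.le hx21 hb
    have u3 : 0 < x1 ^ a := Real.rpow_pos_of_pos hx10 a
    nlinarith
  set g1 : ℝ → ℝ := fun v => (1 - (x1 * v) ^ p1) ^ (-(1 / p1)) with hg1def
  set g2 : ℝ → ℝ := fun v => (1 - (x2 * v) ^ p2) ^ (-(1 / p2)) with hg2def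
  set gb : ℝ → ℝ := fun v =>
    (1 - (xb * v) ^ (a * p1 + b * p2)) ^ (-(1 / (a * p1 + b * p2))) with hgbdef
  have hc1 : ContinuousOn g1 (Icc 0 1) := scaled_contOn hp1 hx10 hx11
  have hc2 : ContinuousOn g2 (Icc 0 1) := scaled_contOn hp2 hx20 hx21
  have hcb : ContinuousOn gb (Icc 0 1) := scaled_contOn hpbar hxb0 hxb1
  have hg1pos : ∀ v ∈ Icc (0:ℝ) 1, 0 < g1 v := fun v hv =>
    lt_of_lt_of_le one_pos (one_le_integrand hp1 (mul_nonneg hx10.le hv.1)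
      (lt_of_le_of_lt (by simpa using mul_le_of_le_one_right hx10.le hv.2) hx11))
  have hg2pos : ∀ v ∈ Icc (0:ℝ) 1, 0 < g2 v := fun v hv =>
    lt_of_lt_of_le one_pos (one_le_integrand hp2 (mul_nonneg hx20.le hv.1)
      (lt_of_le_of_lt (by simpa using mul_le_of_le_one_right hx20.le hv.2) hx21))
  have hcprod : ContinuousOn (fun v => g1 v ^ a * g2 v ^ b) (Icc 0 1) := by
    apply ContinuousOn.mul
    · exact hc1.rpow_const fun v hv => Or.inl (ne_of_gt (hg1pos v hv))
    · exact hc2.rpow_const fun v hv => Or.inl (ne_of_gt (hg2pos v hv))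
  -- pointwise strict inequality
  have hpt : ∀ v ∈ Ioc (0:ℝ) 1, gb v < g1 v ^ a * g2 v ^ b := by
    intro v hv
    have hv0 : 0 < v := hv.1
    have ht1 : x1 * v < 1 :=
      lt_of_le_of_lt (by simpa using mul_le_of_le_one_right hx10.le hv.2) hx11
    have ht2 : x2 * v < 1 :=
      lt_of_le_of_lt (by simpa using mul_le_of_le_one_right hx20.le hv.2) hx21
    have hsplit : (x1 * v) ^ a * (x2 * v) ^ b = xb * v := by
      rw [Real.mul_rpow hx10.le hv0.le, Real.mul_rpow hx20.le hv0.le]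
      have : v ^ a * v ^ b = v := by
        rw [← Real.rpow_add hv0, hab, Real.rpow_one]
      calc x1 ^ a * v ^ a * (x2 ^ b * v ^ b) = x1 ^ a * x2 ^ b * (v ^ a * v ^ b) := by ring
        _ = xb * v := by rw [this]
    have := pointwise_rpow hp1 hp2 hne (mul_pos hx10 hv0) ht1 (mul_pos hx20 hv0) ht2 ha hb hab
    rw [hsplit] at this
    exact this
  -- strict integral inequality
  have hstep1 : (∫ v in (0:ℝ)..1, gb v) < ∫ v in (0:ℝ)..1, g1 v ^ a * g2 v ^ b := by
    apply intervalIntegral.integral_lt_integral_of_continuousOn_of_le_of_exists_lt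
      zero_lt_one hcb hcprod (fun v hv => (hpt v hv).le)
    exact ⟨1, ⟨zero_le_one, le_refl 1⟩, hpt 1 ⟨zero_lt_one, le_refl 1⟩⟩
  -- Hölder
  have hstep2 : (∫ v in (0:ℝ)..1, g1 v ^ a * g2 v ^ b)
      ≤ (∫ v in (0:ℝ)..1, g1 v) ^ a * (∫ v in (0:ℝ)..1, g2 v) ^ b := by
    have hμ : MeasureTheory.IsFiniteMeasure (MeasureTheory.volume.restrict (Ioc (0:ℝ) 1)) := by
      constructor
      rw [MeasureTheory.Measure.restrict_apply_univ]
      simp [Real.volume_Ioc]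
    rw [intervalIntegral.integral_of_le zero_le_one, intervalIntegral.integral_of_le zero_le_one,
      intervalIntegral.integral_of_le zero_le_one]
    have hpq : (1 / a).HolderConjugate (1 / b) := Real.holderConjugate_one_div ha hb hab
    have hcg1 : ContinuousOn (fun v => g1 v ^ a) (Icc 0 1) :=
      hc1.rpow_const fun v hv => Or.inl (ne_of_gt (hg1pos v hv))
    have hcg2 : ContinuousOn (fun v => g2 v ^ b) (Icc 0 1) :=
      hc2.rpow_const fun v hv => Or.inl (ne_of_gt (hg2pos v hv))
    have hm1 : MeasureTheory.AEStronglyMeasurable (fun v => g1 v ^ a)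
        (MeasureTheory.volume.restrict (Ioc (0:ℝ) 1)) :=
      (hcg1.mono Ioc_subset_Icc_self).aestronglyMeasurable measurableSet_Ioc
    have hm2 : MeasureTheory.AEStronglyMeasurable (fun v => g2 v ^ b)
        (MeasureTheory.volume.restrict (Ioc (0:ℝ) 1)) :=
      (hcg2.mono Ioc_subset_Icc_self).aestronglyMeasurable measurableSet_Ioc
    obtain ⟨C1, hC1⟩ := isCompact_Icc.exists_bound_of_continuousOn hcg1
    obtain ⟨C2, hC2⟩ := isCompact_Icc.exists_bound_of_continuousOn hcg2
    have hmem1 : MeasureTheory.MemLp (fun v => g1 v ^ a) (ENNReal.ofReal (1 / a))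
        (MeasureTheory.volume.restrict (Ioc (0:ℝ) 1)) :=
      MeasureTheory.MemLp.of_bound hm1 C1
        ((MeasureTheory.ae_restrict_iff' measurableSet_Ioc).2
          (MeasureTheory.ae_of_all _ fun v hv => hC1 v (Ioc_subset_Icc_self hv)))
    have hmem2 : MeasureTheory.MemLp (fun v => g2 v ^ b) (ENNReal.ofReal (1 / b))
        (MeasureTheory.volume.restrict (Ioc (0:ℝ) 1)) :=
      MeasureTheory.MemLp.of_bound hm2 C2
        ((MeasureTheory.ae_restrict_iff' measurableSet_Ioc).2
          (MeasureTheory.ae_of_all _ fun v hv => hC2 v (Ioc_subset_Icc_self hv)))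
    have hnn1 : 0 ≤ᵐ[MeasureTheory.volume.restrict (Ioc (0:ℝ) 1)] fun v => g1 v ^ a :=
      (MeasureTheory.ae_restrict_iff' measurableSet_Ioc).2
        (MeasureTheory.ae_of_all _ fun v hv =>
          Real.rpow_nonneg (hg1pos v (Ioc_subset_Icc_self hv)).le a)
    have hnn2 : 0 ≤ᵐ[MeasureTheory.volume.restrict (Ioc (0:ℝ) 1)] fun v => g2 v ^ b :=
      (MeasureTheory.ae_restrict_iff' measurableSet_Ioc).2
        (MeasureTheory.ae_of_all _ fun v hv =>
          Real.rpow_nonneg (hg2pos v (Ioc_subset_Icc_self hv)).le b)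
    have h := MeasureTheory.integral_mul_le_Lp_mul_Lq_of_nonneg hpq hnn1 hnn2 hmem1 hmem2
    rw [one_div_one_div, one_div_one_div] at h
    have e1 : ∫ v in Ioc (0:ℝ) 1, ((g1 v ^ a) ^ (1 / a)) = ∫ v in Ioc (0:ℝ) 1, g1 v := by
      apply MeasureTheory.setIntegral_congr_fun measurableSet_Ioc
      intro v hv
      show (g1 v ^ a) ^ (1 / a) = g1 v
      rw [← Real.rpow_mul (hg1pos v (Ioc_subset_Icc_self hv)).le,
        mul_one_div_cancel (ne_of_gt ha), Real.rpow_one]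
    have e2 : ∫ v in Ioc (0:ℝ) 1, ((g2 v ^ b) ^ (1 / b)) = ∫ v in Ioc (0:ℝ) 1, g2 v := by
      apply MeasureTheory.setIntegral_congr_fun measurableSet_Ioc
      intro v hv
      show (g2 v ^ b) ^ (1 / b) = g2 v
      rw [← Real.rpow_mul (hg2pos v (Ioc_subset_Icc_self hv)).le,
        mul_one_div_cancel (ne_of_gt hb), Real.rpow_one]
    rw [e1, e2] at h
    exact h
  -- lower bounds for the integrals
  have hA1 : (1:ℝ) ≤ ∫ v in (0:ℝ)..1, g1 v := by
    have h0 : IntervalIntegrable (fun _ : ℝ => (1:ℝ)) MeasureTheory.volume 0 1 :=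
      intervalIntegrable_const
    have := intervalIntegral.integral_mono_on zero_le_one h0
      (hc1.intervalIntegrable_of_Icc zero_le_one)
      (fun v hv => one_le_integrand hp1 (mul_nonneg hx10.le hv.1)
        (lt_of_le_of_lt (by simpa using mul_le_of_le_one_right hx10.le hv.2) hx11))
    simpa using this
  have hA2 : (1:ℝ) ≤ ∫ v in (0:ℝ)..1, g2 v := by
    have h0 : IntervalIntegrable (fun _ : ℝ => (1:ℝ)) MeasureTheory.volume 0 1 :=
      intervalIntegrable_const
    have := intervalIntegral.integral_mono_on zero_le_one h0
      (hc2.intervalIntegrable_of_Icc zero_le_one)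
      (fun v hv => one_le_integrand hp2 (mul_nonneg hx20.le hv.1)
        (lt_of_le_of_lt (by simpa using mul_le_of_le_one_right hx20.le hv.2) hx21))
    simpa using this
  have e1 : x1 * (∫ v in (0:ℝ)..1, g1 v) = yv := ((I_scaling hx10).symm.trans h1)
  have e2 : x2 * (∫ v in (0:ℝ)..1, g2 v) = yv := ((I_scaling hx20).symm.trans h2)
  have hyv : 0 < yv := by
    rw [← e1]
    exact mul_pos hx10 (lt_of_lt_of_le one_pos hA1)
  rw [I_scaling hxb0]
  calc xb * ∫ v in (0:ℝ)..1, gb v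
      < xb * ((∫ v in (0:ℝ)..1, g1 v) ^ a * (∫ v in (0:ℝ)..1, g2 v) ^ b) :=
        mul_lt_mul_of_pos_left (lt_of_lt_of_le hstep1 hstep2) hxb0
    _ = (x1 * ∫ v in (0:ℝ)..1, g1 v) ^ a * (x2 * ∫ v in (0:ℝ)..1, g2 v) ^ b := by
        rw [Real.mul_rpow hx10.le (le_trans zero_le_one hA1),
          Real.mul_rpow hx20.le (le_trans zero_le_one hA2), hxbdef]
        ring
    _ = yv := by
        rw [e1, e2, ← Real.rpow_add hyv, hab, Real.rpow_one]

lemma I_mono {p x x' : ℝ} (hp : 0 < p) (hx0 : 0 ≤ x) (hxx : x ≤ x') (hx1 : x' < 1) :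
    (∫ t in (0:ℝ)..x, (1 - t ^ p) ^ (-(1 / p)))
      ≤ ∫ t in (0:ℝ)..x', (1 - t ^ p) ^ (-(1 / p)) := by
  have hi1 : IntervalIntegrable (fun t : ℝ => (1 - t ^ p) ^ (-(1 / p)))
      MeasureTheory.volume 0 x :=
    ((integrand_contOn hp hx1).mono (Icc_subset_Icc le_rfl hxx)).intervalIntegrable_of_Icc hx0
  have hi2 : IntervalIntegrable (fun t : ℝ => (1 - t ^ p) ^ (-(1 / p)))
      MeasureTheory.volume x x' := by
    apply ContinuousOn.intervalIntegrable
    rw [uIcc_of_le hxx]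
    exact (integrand_contOn hp hx1).mono (Icc_subset_Icc hx0 le_rfl)
  rw [← intervalIntegral.integral_add_adjacent_intervals hi1 hi2]
  have hnn : 0 ≤ ∫ t in x..x', (1 - t ^ p) ^ (-(1 / p)) := by
    apply intervalIntegral.integral_nonneg hxx
    intro t ht
    exact le_trans zero_le_one (one_le_integrand hp (le_trans hx0 ht.1)
      (lt_of_le_of_lt ht.2 hx1))
  linarith

lemma exists_inv (sinp : ℝ → ℝ → ℝ)
    (hinv : ∀ p : ℝ, 0 < p → ∀ x ∈ Set.Ico (0:ℝ) 1,
      sinp p (∫ t in (0:ℝ)..x, (1 - t ^ p) ^ (-(1 / p))) = x)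
    {y : ℝ} (hy0 : 0 < y) (hy1 : y < 1) {p : ℝ} (hp : 0 < p) :
    ∃ x : ℝ, 0 < x ∧ x < 1 ∧
      (∫ t in (0:ℝ)..x, (1 - t ^ p) ^ (-(1 / p))) = y ∧ sinp p y = x := by
  set F : ℝ → ℝ := fun x => ∫ t in (0:ℝ)..x, (1 - t ^ p) ^ (-(1 / p)) with hFdef
  have hint : MeasureTheory.IntegrableOn (fun t : ℝ => (1 - t ^ p) ^ (-(1 / p)))
      (uIcc 0 y) MeasureTheory.volume := by
    rw [uIcc_of_le hy0.le]
    exact (integrand_contOn hp hy1).integrableOn_Icc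
  have hcont : ContinuousOn F (Icc 0 y) := by
    have := intervalIntegral.continuousOn_primitive_interval hint
    rwa [uIcc_of_le hy0.le] at this
  have hF0 : F 0 = 0 := intervalIntegral.integral_same
  have hFy : y ≤ F y := by
    have h0 : IntervalIntegrable (fun _ : ℝ => (1:ℝ)) MeasureTheory.volume 0 y :=
      intervalIntegrable_const
    have hFi : IntervalIntegrable (fun t : ℝ => (1 - t ^ p) ^ (-(1 / p)))
        MeasureTheory.volume 0 y :=
      (integrand_contOn hp hy1).intervalIntegrable_of_Icc hy0.le
    have hle := intervalIntegral.integral_mono_on hy0.le h0 hFi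
      (fun t ht => one_le_integrand hp ht.1 (lt_of_le_of_lt ht.2 hy1))
    have hconst : (∫ _t in (0:ℝ)..y, (1:ℝ)) = y := by simp
    exact le_trans (le_of_eq hconst.symm) hle
  have hyin : y ∈ Icc (F 0) (F y) := by
    rw [hF0]
    exact ⟨hy0.le, hFy⟩
  obtain ⟨x, hxmem, hFx⟩ := intermediate_value_Icc hy0.le hcont hyin
  have hx1 : x < 1 := lt_of_le_of_lt hxmem.2 hy1
  have hx0 : 0 < x := by
    rcases eq_or_lt_of_le hxmem.1 with h | h
    · exfalso
      rw [← h, hF0] at hFx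
      linarith
    · exact h
  refine ⟨x, hx0, hx1, hFx, ?_⟩
  have hFx' : (∫ t in (0:ℝ)..x, (1 - t ^ p) ^ (-(1 / p))) = y := hFx
  have := hinv p hp x ⟨hx0.le, hx1⟩
  rwa [hFx'] at this


/-- For fixed `y ∈ (0,1)`, `p ↦ sin_p y` is strictly log-concave on `(0,∞)`;
in particular the Turán inequality `(sin_p y)² > sin_{p-1} y · sin_{p+1} y`
holds for `p > 2`.  Here `sinp p` is the inverse of
`x ↦ ∫₀ˣ (1-t^p)^{-1/p} dt` on `[0,1)`. -/
theorem sinp_log_concave (sinp : ℝ → ℝ → ℝ)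
    (hinv : ∀ p : ℝ, 0 < p → ∀ x ∈ Set.Ico (0:ℝ) 1,
      sinp p (∫ t in (0:ℝ)..x, (1 - t ^ p) ^ (-(1 / p))) = x)
    (y : ℝ) (hy : y ∈ Set.Ioo (0:ℝ) 1) :
    StrictConcaveOn ℝ (Set.Ioi (0:ℝ)) (fun p => Real.log (sinp p y)) ∧
    ∀ p : ℝ, 2 < p → sinp (p - 1) y * sinp (p + 1) y < (sinp p y) ^ 2 := by
  obtain ⟨hy0, hy1⟩ := hy
  have hconc : StrictConcaveOn ℝ (Set.Ioi (0:ℝ)) (fun p => Real.log (sinp p y)) := by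
    constructor
    · exact convex_Ioi 0
    · intro p1 hp1 p2 hp2 hne a b ha hb hab
      simp only [smul_eq_mul]
      have hp1' : 0 < p1 := hp1
      have hp2' : 0 < p2 := hp2
      have hpbar : 0 < a * p1 + b * p2 := by positivity
      obtain ⟨x1, hx10, hx11, hI1, hs1⟩ := exists_inv sinp hinv hy0 hy1 hp1'
      obtain ⟨x2, hx20, hx21, hI2, hs2⟩ := exists_inv sinp hinv hy0 hy1 hp2'
      obtain ⟨xb, hxb0, hxb1, hIb, hsb⟩ := exists_inv sinp hinv hy0 hy1 hpbar
      have hkey := I_lt hp1' hp2' hne hx10 hx11 hx20 hx21 ha hb hab hI1 hI2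
      have hprod0 : 0 < x1 ^ a * x2 ^ b := by positivity
      have hprod1 : x1 ^ a * x2 ^ b < 1 := by
        have u1 : x1 ^ a < 1 := Real.rpow_lt_one hx10.le hx11 ha
        have u2 : x2 ^ b < 1 := Real.rpow_lt_one hx20.le hx21 hb
        have u3 : 0 < x1 ^ a := Real.rpow_pos_of_pos hx10 a
        nlinarith
      have hxx : x1 ^ a * x2 ^ b < xb := by
        by_contra hcon
        push_neg at hcon
        have := I_mono hpbar hxb0.le hcon hprod1
        rw [hIb] at this
        linarith
      rw [hs1, hs2, hsb]
      have hlogeq : a * Real.log x1 + b * Real.log x2 = Real.log (x1 ^ a * x2 ^ b) := by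
        rw [Real.log_mul (ne_of_gt (Real.rpow_pos_of_pos hx10 a))
          (ne_of_gt (Real.rpow_pos_of_pos hx20 b)), Real.log_rpow hx10, Real.log_rpow hx20]
      rw [hlogeq]
      exact Real.log_lt_log hprod0 hxx
  refine ⟨hconc, ?_⟩
  intro p hp
  have hpm : (0:ℝ) < p - 1 := by linarith
  have hpp : (0:ℝ) < p + 1 := by linarith
  have hp0 : (0:ℝ) < p := by linarith
  obtain ⟨s1, hs10, hs11, _, he1⟩ := exists_inv sinp hinv hy0 hy1 hpm
  obtain ⟨s2, hs20, hs21, _, he2⟩ := exists_inv sinp hinv hy0 hy1 hp0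
  obtain ⟨s3, hs30, hs31, _, he3⟩ := exists_inv sinp hinv hy0 hy1 hpp
  have hne : p - 1 ≠ p + 1 := by linarith
  have h := hconc.2 (show p - 1 ∈ Set.Ioi (0:ℝ) from hpm)
    (show p + 1 ∈ Set.Ioi (0:ℝ) from hpp)
    hne (by norm_num : (0:ℝ) < 1/2) (by norm_num : (0:ℝ) < 1/2) (by norm_num)
  simp only [smul_eq_mul] at h
  have harg : (1/2 : ℝ) * (p - 1) + (1/2 : ℝ) * (p + 1) = p := by ring
  rw [harg] at h
  rw [he1, he2, he3] at h
  rw [he1, he2, he3]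
  have hlt : Real.log (s1 * s3) < Real.log (s2 ^ 2) := by
    rw [Real.log_mul (ne_of_gt hs10) (ne_of_gt hs30), Real.log_pow]
    push_cast
    linarith
  exact (Real.log_lt_log_iff (mul_pos hs10 hs30) (pow_pos hs20 2)).mp hlt
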